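/- arXiv:2006.02423 — 6 statements merged into one kernel-verified Lean document; each statement's English description precedes it below -/
import Mathlib

section
/- Fix a time t ≥ 2 and suppose the monotone trends condition holds at time t: min{Δ_t(a), Δ_t(b)} ≤ Δ_t(trt) ≤ max{Δ_t(a), Δ_t(b)}. Then the per-period DID parameters bracket the increment of the treatment effect: min{τ_t(a), τ_t(b)} ≤ A_t − A_{t−1} ≤ max{τ_t(a), τ_t(b)}. -/
/-- Under the monotone trends condition at time `t ≥ 2`, the per-period
DID parameters `τ_t(a), τ_t(b)` bracket the increment `A_t − A_{t−1}` of the treatment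
effect.  Here `μa, μb, μc` are the mean untreated outcomes of groups `a`, `b`, `trt`,
`Δ_t(g) = μ_g(t) − μ_g(t−1)`, and `τ_t(g) = (A_t − A_{t−1}) + Δ_t(trt) − Δ_t(g)`. -/
theorem did_increment_bracketing
    (μa μb μc A : ℕ → ℝ) (t : ℕ) (ht : 2 ≤ t)
    (hmt : min (μa t - μa (t - 1)) (μb t - μb (t - 1)) ≤ μc t - μc (t - 1) ∧
           μc t - μc (t - 1) ≤ max (μa t - μa (t - 1)) (μb t - μb (t - 1))) :
    min ((A t - A (t - 1)) + (μc t - μc (t - 1)) - (μa t - μa (t - 1)))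
        ((A t - A (t - 1)) + (μc t - μc (t - 1)) - (μb t - μb (t - 1)))
      ≤ A t - A (t - 1) ∧
    A t - A (t - 1) ≤
      max ((A t - A (t - 1)) + (μc t - μc (t - 1)) - (μa t - μa (t - 1)))
          ((A t - A (t - 1)) + (μc t - μc (t - 1)) - (μb t - μb (t - 1))) := by
  obtain ⟨h1, h2⟩ := hmt
  constructor
  · rcases le_total (μa t - μa (t-1)) (μb t - μb (t-1)) with h | h
    · exact min_le_of_right_le (by simp [max_eq_right h] at h2; linarith)
    · exact min_le_of_left_le (by simp [max_eq_left h] at h2; linarith)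
  · rcases le_total (μa t - μa (t-1)) (μb t - μb (t-1)) with h | h
    · exact le_max_of_le_left (by simp [min_eq_left h] at h1; linarith)
    · exact le_max_of_le_right (by simp [min_eq_right h] at h1; linarith)
end

section
/- (Theorem 1, DID bracketing under monotone trends.) Suppose the monotone trends condition holds at every time s with 2 ≤ s ≤ t, namely min{Δ_s(a), Δ_s(b)} ≤ Δ_s(trt) ≤ max{Δ_s(a), Δ_s(b)}, and A_1 = 0. Then for every t ≥ 2 the average treatment effect on the treated is partially identified by ∑_{s=2}^{t} min{τ_s(a), τ_s(b)} ≤ A_t ≤ ∑_{s=2}^{t} max{τ_s(a), τ_s(b)}. -/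
lemma telescope_Icc (A : ℕ → ℝ) (t : ℕ) (ht : 2 ≤ t) :
    ∑ s ∈ Finset.Icc 2 t, (A s - A (s - 1)) = A t - A 1 := by
  induction t, ht using Nat.le_induction with
  | base => simp
  | succ n hn ih =>
      rw [Finset.sum_Icc_succ_top (by omega), ih]
      simp only [Nat.add_sub_cancel]
      ring

/-- Theorem 1, DID bracketing under monotone trends: if the monotone
trends condition holds for every `s` with `2 ≤ s ≤ t` and `A 1 = 0`, then
`∑_{s=2}^t min{τ_s(a), τ_s(b)} ≤ A_t ≤ ∑_{s=2}^t max{τ_s(a), τ_s(b)}`, where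
`Δ_s(g) = μ_g(s) − μ_g(s−1)` and `τ_s(g) = (A_s − A_{s−1}) + Δ_s(trt) − Δ_s(g)`. -/
theorem did_bracketing_monotone_trends
    (μa μb μc A : ℕ → ℝ) (t : ℕ) (ht : 2 ≤ t) (hA1 : A 1 = 0)
    (hmt : ∀ s ∈ Finset.Icc 2 t,
      min (μa s - μa (s - 1)) (μb s - μb (s - 1)) ≤ μc s - μc (s - 1) ∧
      μc s - μc (s - 1) ≤ max (μa s - μa (s - 1)) (μb s - μb (s - 1))) :
    (∑ s ∈ Finset.Icc 2 t,
        min ((A s - A (s - 1)) + (μc s - μc (s - 1)) - (μa s - μa (s - 1)))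
            ((A s - A (s - 1)) + (μc s - μc (s - 1)) - (μb s - μb (s - 1)))) ≤ A t ∧
    A t ≤ (∑ s ∈ Finset.Icc 2 t,
        max ((A s - A (s - 1)) + (μc s - μc (s - 1)) - (μa s - μa (s - 1)))
            ((A s - A (s - 1)) + (μc s - μc (s - 1)) - (μb s - μb (s - 1)))) := by
  have htel := telescope_Icc A t ht
  rw [hA1, sub_zero] at htel
  constructor
  · rw [← htel]
    refine Finset.sum_le_sum fun s hs => ?_
    have h := (hmt s hs).2
    have : min ((A s - A (s - 1)) + (μc s - μc (s - 1)) - (μa s - μa (s - 1)))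
            ((A s - A (s - 1)) + (μc s - μc (s - 1)) - (μb s - μb (s - 1)))
        = (A s - A (s - 1)) + ((μc s - μc (s - 1))
            - max (μa s - μa (s - 1)) (μb s - μb (s - 1))) := by
      rcases le_total (μa s - μa (s - 1)) (μb s - μb (s - 1)) with hab | hab <;>
        simp [min_def, max_def, hab] <;> split <;> ring_nf <;> linarith
    rw [this]; linarith
  · rw [← htel]
    refine Finset.sum_le_sum fun s hs => ?_
    have h := (hmt s hs).1
    have : max ((A s - A (s - 1)) + (μc s - μc (s - 1)) - (μa s - μa (s - 1)))
            ((A s - A (s - 1)) + (μc s - μc (s - 1)) - (μb s - μb (s - 1)))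
        = (A s - A (s - 1)) + ((μc s - μc (s - 1))
            - min (μa s - μa (s - 1)) (μb s - μb (s - 1))) := by
      rcases le_total (μa s - μa (s - 1)) (μb s - μb (s - 1)) with hab | hab <;>
        simp [min_def, max_def, hab] <;> split <;> ring_nf <;> linarith
    rw [this]; linarith
end

section
/- (Interactive fixed effects imply monotone trends.) Suppose the group-level untreated mean outcomes follow the single-factor interactive fixed effects model μ_g(t) = α_t + η_g + λ_g F_t for g ∈ {a, b, trt} and all t, where α : ℕ → ℝ are time fixed effects, η_g, λ_g ∈ ℝ are group-specific constants, and F : ℕ → ℝ is a common latent factor. If either λ_a ≤ λ_trt ≤ λ_b or λ_b ≤ λ_trt ≤ λ_a, then for every t ≥ 2 the monotone trends condition holds: min{Δ_t(a), Δ_t(b)} ≤ Δ_t(trt) ≤ max{Δ_t(a), Δ_t(b)}. -/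
/-- Interactive fixed effects imply monotone trends: if the group mean
outcomes follow the single-factor interactive fixed effects model
`μ_g(t) = α_t + η_g + λ_g F_t`, and the factor loadings satisfy
`λ_a ≤ λ_trt ≤ λ_b` or `λ_b ≤ λ_trt ≤ λ_a`, then the monotone trends condition holds
at every time `t ≥ 2`. -/
theorem interactive_fixed_effects_imply_monotone_trends
    (α F μa μb μc : ℕ → ℝ) (ηa ηb ηc lamA lamB lamC : ℝ)
    (hμa : ∀ t, μa t = α t + ηa + lamA * F t)
    (hμb : ∀ t, μb t = α t + ηb + lamB * F t)
    (hμc : ∀ t, μc t = α t + ηc + lamC * F t)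
    (hlam : (lamA ≤ lamC ∧ lamC ≤ lamB) ∨ (lamB ≤ lamC ∧ lamC ≤ lamA)) :
    ∀ t : ℕ, 2 ≤ t →
      min (μa t - μa (t - 1)) (μb t - μb (t - 1)) ≤ μc t - μc (t - 1) ∧
      μc t - μc (t - 1) ≤ max (μa t - μa (t - 1)) (μb t - μb (t - 1)) := by
  intro t _
  have ea := hμa t; have ea' := hμa (t-1)
  have eb := hμb t; have eb' := hμb (t-1)
  have ec := hμc t; have ec' := hμc (t-1)
  set d := F t - F (t-1) with hd
  have ha : μa t - μa (t-1) = (α t - α (t-1)) + lamA * d := by rw [ea, ea']; ring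
  have hb : μb t - μb (t-1) = (α t - α (t-1)) + lamB * d := by rw [eb, eb']; ring
  have hc : μc t - μc (t-1) = (α t - α (t-1)) + lamC * d := by rw [ec, ec']; ring
  rw [ha, hb, hc]
  rcases le_total 0 d with hdpos | hdneg <;> rcases hlam with ⟨h1, h2⟩ | ⟨h1, h2⟩ <;>
    constructor
  · exact le_trans (min_le_left _ _) (by nlinarith)
  · exact le_trans (by nlinarith) (le_max_right _ _)
  · exact le_trans (min_le_right _ _) (by nlinarith)
  · exact le_trans (by nlinarith) (le_max_left _ _)
  · exact le_trans (min_le_right _ _) (by nlinarith)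
  · exact le_trans (by nlinarith) (le_max_left _ _)
  · exact le_trans (min_le_left _ _) (by nlinarith)
  · exact le_trans (by nlinarith) (le_max_right _ _)
end

section
/- (Original DID bracketing via stochastic ordering.) Let μ_lc, μ_trt, μ_uc be Borel probability measures on ℝ that are stochastically ordered in the sense that for every bounded, measurable, nondecreasing function f : ℝ → ℝ one has ∫ f dμ_lc ≤ ∫ f dμ_trt ≤ ∫ f dμ_uc. Let d : ℝ → ℝ be bounded and measurable, and assume d is either monotone nondecreasing or monotone nonincreasing. Let ψ ∈ ℝ and define τ(lc) = ψ + ∫ d dμ_trt − ∫ d dμ_lc and τ(uc) = ψ + ∫ d dμ_trt − ∫ d dμ_uc. Then min{τ(lc), τ(uc)} ≤ ψ ≤ max{τ(lc), τ(uc)}. -/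
open MeasureTheory

/-- Original DID bracketing via stochastic ordering: if the Borel
probability measures `μlc, μtrt, μuc` on `ℝ` are stochastically ordered (integrals of
bounded measurable nondecreasing functions are ordered), `d : ℝ → ℝ` is bounded,
measurable, and monotone (nondecreasing or nonincreasing), and
`τ(lc) = ψ + ∫ d dμtrt − ∫ d dμlc`, `τ(uc) = ψ + ∫ d dμtrt − ∫ d dμuc`, then
`min{τ(lc), τ(uc)} ≤ ψ ≤ max{τ(lc), τ(uc)}`. -/
theorem original_did_bracketing_stochastic_order
    (μlc μtrt μuc : Measure ℝ)
    [IsProbabilityMeasure μlc] [IsProbabilityMeasure μtrt] [IsProbabilityMeasure μuc]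
    (horder : ∀ f : ℝ → ℝ, Measurable f → Monotone f → (∃ C : ℝ, ∀ x, |f x| ≤ C) →
      (∫ x, f x ∂μlc) ≤ (∫ x, f x ∂μtrt) ∧ (∫ x, f x ∂μtrt) ≤ (∫ x, f x ∂μuc))
    (d : ℝ → ℝ) (hd_meas : Measurable d) (hd_bdd : ∃ C : ℝ, ∀ x, |d x| ≤ C)
    (hd_mono : Monotone d ∨ Antitone d)
    (ψ : ℝ) :
    min (ψ + (∫ x, d x ∂μtrt) - ∫ x, d x ∂μlc)
        (ψ + (∫ x, d x ∂μtrt) - ∫ x, d x ∂μuc) ≤ ψ ∧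
    ψ ≤ max (ψ + (∫ x, d x ∂μtrt) - ∫ x, d x ∂μlc)
            (ψ + (∫ x, d x ∂μtrt) - ∫ x, d x ∂μuc) := by
  rcases hd_mono with hm | ha
  · obtain ⟨h1, h2⟩ := horder d hd_meas hm hd_bdd
    constructor
    · exact le_trans (min_le_right _ _) (by linarith)
    · exact le_trans (by linarith) (le_max_left _ _)
  · obtain ⟨C, hC⟩ := hd_bdd
    obtain ⟨h1, h2⟩ := horder (fun x => -d x) hd_meas.neg
      (fun a b hab => neg_le_neg (ha hab))
      ⟨C, fun x => by simpa using hC x⟩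
    simp only [integral_neg, neg_le_neg_iff] at h1 h2
    constructor
    · exact le_trans (min_le_left _ _) (by linarith)
    · exact le_trans (by linarith) (le_max_right _ _)
end

section
/- (Validity of the falsification test.) Let (Ω, 𝓕, P) be a probability space and let p_a, p_b : Ω → ℝ be random variables taking values in [0, 1]. Suppose either (i) P(p_a ≤ t) ≤ t and P(p_b ≤ t) ≤ t for all t ∈ [0, 1], or (ii) P(1 − p_a ≤ t) ≤ t and P(1 − p_b ≤ t) ≤ t for all t ∈ [0, 1]. Then for every α ∈ [0, 1], P( max(min(p_a, p_b), min(1 − p_a, 1 − p_b)) ≤ α/2 ) ≤ α. -/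
open MeasureTheory

/-- Validity of the falsification test: if `p_a, p_b` are `[0,1]`-valued
random variables and either both are valid p-values, or both of `1 − p_a, 1 − p_b` are
valid p-values, then the falsification test rejecting when
`max(min(p_a, p_b), min(1 − p_a, 1 − p_b)) ≤ α/2` has level at most `α`. -/
theorem falsification_test_validity
    {Ω : Type*} [MeasurableSpace Ω] (P : Measure Ω) [IsProbabilityMeasure P]
    (pa pb : Ω → ℝ)
    (hpa : ∀ ω, pa ω ∈ Set.Icc (0 : ℝ) 1) (hpb : ∀ ω, pb ω ∈ Set.Icc (0 : ℝ) 1)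
    (hvalid :
      (∀ t ∈ Set.Icc (0 : ℝ) 1,
        P {ω | pa ω ≤ t} ≤ ENNReal.ofReal t ∧ P {ω | pb ω ≤ t} ≤ ENNReal.ofReal t) ∨
      (∀ t ∈ Set.Icc (0 : ℝ) 1,
        P {ω | 1 - pa ω ≤ t} ≤ ENNReal.ofReal t ∧
        P {ω | 1 - pb ω ≤ t} ≤ ENNReal.ofReal t))
    (α : ℝ) (hα : α ∈ Set.Icc (0 : ℝ) 1) :
    P {ω | max (min (pa ω) (pb ω)) (min (1 - pa ω) (1 - pb ω)) ≤ α / 2} ≤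
      ENNReal.ofReal α := by
  obtain ⟨hα0, hα1⟩ := hα
  have ht : α / 2 ∈ Set.Icc (0 : ℝ) 1 := ⟨by linarith, by linarith⟩
  have hsum : ENNReal.ofReal (α / 2) + ENNReal.ofReal (α / 2) = ENNReal.ofReal α := by
    rw [← ENNReal.ofReal_add (by linarith) (by linarith)]
    ring_nf
  rcases hvalid with h | h
  · obtain ⟨ha, hb⟩ := h (α / 2) ht
    calc P {ω | max (min (pa ω) (pb ω)) (min (1 - pa ω) (1 - pb ω)) ≤ α / 2}
        ≤ P ({ω | pa ω ≤ α / 2} ∪ {ω | pb ω ≤ α / 2}) := by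
          apply measure_mono
          intro ω hω
          have h1 : min (pa ω) (pb ω) ≤ α / 2 :=
            le_trans (le_max_left _ _) hω
          rcases min_le_iff.mp h1 with h' | h'
          · exact Or.inl h'
          · exact Or.inr h'
      _ ≤ P {ω | pa ω ≤ α / 2} + P {ω | pb ω ≤ α / 2} := measure_union_le _ _
      _ ≤ ENNReal.ofReal (α / 2) + ENNReal.ofReal (α / 2) := add_le_add ha hb
      _ = ENNReal.ofReal α := hsum
  · obtain ⟨ha, hb⟩ := h (α / 2) ht
    calc P {ω | max (min (pa ω) (pb ω)) (min (1 - pa ω) (1 - pb ω)) ≤ α / 2}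
        ≤ P ({ω | 1 - pa ω ≤ α / 2} ∪ {ω | 1 - pb ω ≤ α / 2}) := by
          apply measure_mono
          intro ω hω
          have h1 : min (1 - pa ω) (1 - pb ω) ≤ α / 2 :=
            le_trans (le_max_right _ _) hω
          rcases min_le_iff.mp h1 with h' | h'
          · exact Or.inl h'
          · exact Or.inr h'
      _ ≤ P {ω | 1 - pa ω ≤ α / 2} + P {ω | 1 - pb ω ≤ α / 2} := measure_union_le _ _
      _ ≤ ENNReal.ofReal (α / 2) + ENNReal.ofReal (α / 2) := add_le_add ha hb
      _ = ENNReal.ofReal α := hsum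
end

section
/- (Theorem 3(a), sensitivity bounds.) Fix t ≥ 2 and nonnegative sensitivity parameters γ_s ≥ 0 and δ_s ≥ 0 for s = 2, …, t. Suppose the relaxed monotone trends condition holds at every s with 2 ≤ s ≤ t: min{Δ_s(a), Δ_s(b)} − γ_s ≤ Δ_s(trt) ≤ max{Δ_s(a), Δ_s(b)} + δ_s, and A_1 = 0. Then ∑_{s=2}^{t} min{τ_s(a), τ_s(b)} − ∑_{s=2}^{t} δ_s ≤ A_t ≤ ∑_{s=2}^{t} max{τ_s(a), τ_s(b)} + ∑_{s=2}^{t} γ_s. -/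
lemma did_telescope (A : ℕ → ℝ) : ∀ t, 1 ≤ t →
    ∑ s ∈ Finset.Icc 2 t, (A s - A (s - 1)) = A t - A 1 := by
  intro t
  induction t with
  | zero => omega
  | succ n ih =>
    intro _
    rcases Nat.lt_or_ge n 1 with h | h
    · interval_cases n
      · simp
    · rw [Finset.sum_Icc_succ_top (by omega : 2 ≤ n + 1), ih h]
      simp

/-- Theorem 3(a), sensitivity bounds: if the relaxed monotone trends
condition `min{Δ_s(a), Δ_s(b)} − γ_s ≤ Δ_s(trt) ≤ max{Δ_s(a), Δ_s(b)} + δ_s` holds for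
every `2 ≤ s ≤ t` with nonnegative sensitivity parameters `γ_s, δ_s`, and `A 1 = 0`,
then `∑ min{τ_s(a), τ_s(b)} − ∑ δ_s ≤ A_t ≤ ∑ max{τ_s(a), τ_s(b)} + ∑ γ_s`. -/
theorem did_sensitivity_bounds
    (μa μb μc A γ δ : ℕ → ℝ) (t : ℕ) (ht : 2 ≤ t) (hA1 : A 1 = 0)
    (hγ : ∀ s ∈ Finset.Icc 2 t, 0 ≤ γ s) (hδ : ∀ s ∈ Finset.Icc 2 t, 0 ≤ δ s)
    (hmt : ∀ s ∈ Finset.Icc 2 t,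
      min (μa s - μa (s - 1)) (μb s - μb (s - 1)) - γ s ≤ μc s - μc (s - 1) ∧
      μc s - μc (s - 1) ≤ max (μa s - μa (s - 1)) (μb s - μb (s - 1)) + δ s) :
    (∑ s ∈ Finset.Icc 2 t,
        min ((A s - A (s - 1)) + (μc s - μc (s - 1)) - (μa s - μa (s - 1)))
            ((A s - A (s - 1)) + (μc s - μc (s - 1)) - (μb s - μb (s - 1)))) -
      (∑ s ∈ Finset.Icc 2 t, δ s) ≤ A t ∧
    A t ≤ (∑ s ∈ Finset.Icc 2 t,
        max ((A s - A (s - 1)) + (μc s - μc (s - 1)) - (μa s - μa (s - 1)))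
            ((A s - A (s - 1)) + (μc s - μc (s - 1)) - (μb s - μb (s - 1)))) +
      (∑ s ∈ Finset.Icc 2 t, γ s) := by
  have hAt : A t = ∑ s ∈ Finset.Icc 2 t, (A s - A (s - 1)) := by
    rw [did_telescope A t (by omega), hA1]; ring
  constructor
  · rw [hAt, ← Finset.sum_sub_distrib]
    apply Finset.sum_le_sum
    intro s hs
    have h2 := (hmt s hs).2
    rcases le_total (μa s - μa (s - 1)) (μb s - μb (s - 1)) with h | h
    · rw [max_eq_right h] at h2
      have : min ((A s - A (s - 1)) + (μc s - μc (s - 1)) - (μa s - μa (s - 1)))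
            ((A s - A (s - 1)) + (μc s - μc (s - 1)) - (μb s - μb (s - 1))) ≤
            (A s - A (s - 1)) + (μc s - μc (s - 1)) - (μb s - μb (s - 1)) := min_le_right _ _
      linarith
    · rw [max_eq_left h] at h2
      have : min ((A s - A (s - 1)) + (μc s - μc (s - 1)) - (μa s - μa (s - 1)))
            ((A s - A (s - 1)) + (μc s - μc (s - 1)) - (μb s - μb (s - 1))) ≤
            (A s - A (s - 1)) + (μc s - μc (s - 1)) - (μa s - μa (s - 1)) := min_le_left _ _
      linarith
  · rw [hAt, ← Finset.sum_add_distrib]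
    apply Finset.sum_le_sum
    intro s hs
    have h1 := (hmt s hs).1
    rcases le_total (μa s - μa (s - 1)) (μb s - μb (s - 1)) with h | h
    · rw [min_eq_left h] at h1
      have : (A s - A (s - 1)) + (μc s - μc (s - 1)) - (μa s - μa (s - 1)) ≤
          max ((A s - A (s - 1)) + (μc s - μc (s - 1)) - (μa s - μa (s - 1)))
              ((A s - A (s - 1)) + (μc s - μc (s - 1)) - (μb s - μb (s - 1))) := le_max_left _ _
      linarith
    · rw [min_eq_right h] at h1
      have : (A s - A (s - 1)) + (μc s - μc (s - 1)) - (μb s - μb (s - 1)) ≤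
          max ((A s - A (s - 1)) + (μc s - μc (s - 1)) - (μa s - μa (s - 1)))
              ((A s - A (s - 1)) + (μc s - μc (s - 1)) - (μb s - μb (s - 1))) := le_max_right _ _
      linarith
end
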